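/- Let α be a type of cardinality at least ℵ₂, call a subset of α small if its cardinality is strictly less than that of α, and define A ⫶_C B iff (A∩B)∖C is countable. Then: ⫶ satisfies, for all subsets of α, invariance under every permutation of α, monotonicity, base monotonicity, transitivity, normality and symmetry; it satisfies local character with κ(A) = |A|⁺; for all small A, B, C, B̂ with B ⊆ B̂, if A ⫶_C B then there is a permutation g of α fixing B∪C pointwise with g·A ⫶_C B̂ (extension), and for all small A, B, C there is a permutation g of α fixing C pointwise with g·A ⫶_C B (existence); but ⫶ fails finite character: there are small sets A, B, C (namely A = B of cardinality ℵ₁ and C = ∅) such that A₀ ⫶_C B for every finite A₀ ⊆ A yet not A ⫶_C B. -/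
import Mathlib


universe u

/-- The relation of Example 1.5.5: `A ⫶_C B` iff `(A ∩ B) \ C` is countable. -/
def cInd {α : Type u} (A C B : Set α) : Prop := ((A ∩ B) \ C).Countable

/-- A subset of `α` is small if its cardinality is strictly below that of `α`. -/
def SmallSet {α : Type u} (S : Set α) : Prop := Cardinal.mk ↥S < Cardinal.mk α

open Cardinal Set

lemma exists_swap_perm {α : Type u} {S T : Set α} (hd : Disjoint S T) (e : ↥S ≃ ↥T) :
    ∃ g : Equiv.Perm α, (∀ x, x ∉ S → x ∉ T → g x = x) ∧ (∀ x ∈ S, g x ∈ T) := by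
  classical
  let σ : Equiv.Perm ↥(S ∪ T) :=
    (Equiv.Set.union hd).trans
      (((e.sumCongr e.symm).trans (Equiv.sumComm ↥T ↥S)).trans (Equiv.Set.union hd).symm)
  refine ⟨Equiv.Perm.subtypeCongr σ (Equiv.refl _), ?_, ?_⟩
  · intro x hxS hxT
    have hx : ¬ x ∈ S ∪ T := by simp [hxS, hxT]
    simp [Equiv.Perm.subtypeCongr.right_apply _ _ hx]
  · intro x hxS
    have hx : x ∈ S ∪ T := Or.inl hxS
    rw [Equiv.Perm.subtypeCongr.left_apply _ _ hx]
    have : σ ⟨x, hx⟩ = ⟨(e ⟨x, hxS⟩ : α), Or.inr (e ⟨x, hxS⟩).2⟩ := by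
      simp only [σ, Equiv.trans_apply]
      rw [Equiv.Set.union_apply_left hd hxS]
      simp [Equiv.Set.union_symm_apply_right]
    rw [this]
    exact (e ⟨x, hxS⟩).2

lemma small_union' {α : Type u} (hinf : ℵ₀ ≤ Cardinal.mk α) {S T : Set α}
    (hS : SmallSet S) (hT : SmallSet T) : SmallSet (S ∪ T) :=
  lt_of_le_of_lt (Cardinal.mk_union_le S T) (Cardinal.add_lt_of_lt hinf hS hT)

/-- Extension, as a standalone lemma. -/
lemma ext_lemma {α : Type u} (hα : Cardinal.aleph 2 ≤ Cardinal.mk α)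
    (A B C Bhat : Set α) (hA : SmallSet A) (hB : SmallSet B) (hC : SmallSet C)
    (hBhat : SmallSet Bhat) (hBB : B ⊆ Bhat) (h : cInd A C B) :
    ∃ g : Equiv.Perm α, (∀ x ∈ B ∪ C, g x = x) ∧ cInd (⇑g '' A) C Bhat := by
  have hinf : ℵ₀ ≤ Cardinal.mk α := (Cardinal.aleph0_le_aleph 2).trans hα
  haveI : Infinite α := Cardinal.infinite_iff.2 hinf
  set U : Set α := (A ∪ B) ∪ (C ∪ Bhat) with hU
  have hUsmall : SmallSet U :=
    small_union' hinf (small_union' hinf hA hB) (small_union' hinf hC hBhat)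
  have hcompl : Cardinal.mk ↥(Uᶜ) = Cardinal.mk α := Cardinal.mk_compl_of_infinite U hUsmall
  set S : Set α := A \ (B ∪ C) with hS
  have hScard : Cardinal.mk ↥S ≤ Cardinal.mk ↥(Uᶜ) := by
    rw [hcompl]
    exact le_of_lt (lt_of_le_of_lt (Cardinal.mk_le_mk_of_subset (diff_subset)) hA)
  obtain ⟨T, hTsub, hTcard⟩ := Cardinal.le_mk_iff_exists_subset.1 hScard
  obtain ⟨e⟩ := Cardinal.eq.1 hTcard
  have hdisj : Disjoint S T := by
    refine Set.disjoint_left.2 fun x hxS hxT => ?_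
    exact (hTsub hxT) (Or.inl (Or.inl hxS.1))
  obtain ⟨g, hfix, hmove⟩ := exists_swap_perm hdisj e.symm
  refine ⟨g, ?_, ?_⟩
  · intro x hx
    refine hfix x (fun hxS => hxS.2 hx) (fun hxT => (hTsub hxT) ?_)
    rcases hx with hx | hx
    · exact Or.inl (Or.inr hx)
    · exact Or.inr (Or.inl hx)
  · refine Set.Countable.mono (fun x hx => ?_) h
    obtain ⟨⟨⟨a, haA, rfl⟩, hxBhat⟩, hxC⟩ := hx
    by_cases haS : a ∈ S
    · exact absurd hxBhat (fun hc => (hTsub (hmove a haS)) (Or.inr (Or.inr hc)))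
    · have haBC : a ∈ B ∪ C := by
        by_contra hc
        exact haS ⟨haA, hc⟩
      have haT : a ∉ T := fun hc => (hTsub hc) (Or.inl (Or.inl haA))
      rw [hfix a haS haT] at hxBhat hxC ⊢
      rcases haBC with haB | haC
      · exact ⟨⟨haA, haB⟩, hxC⟩
      · exact absurd haC hxC

/-- Example: no finite character: on a type of cardinality at least `ℵ₂`,
the relation `A ⫶_C B ↔ (A∩B)∖C` countable satisfies invariance (under all permutations),
monotonicity, base monotonicity, transitivity, normality, symmetry, local character with
`κ(A) = |A|⁺`, extension and existence among small sets, but fails finite character,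
witnessed by `A = B` of cardinality `ℵ₁` and `C = ∅`. -/
theorem stmt_19 {α : Type u} (hα : Cardinal.aleph 2 ≤ Cardinal.mk α) :
    (∀ (g : Equiv.Perm α) (A B C : Set α),
      cInd A C B → cInd (⇑g '' A) (⇑g '' C) (⇑g '' B)) ∧
    (∀ A B C A' B' : Set α, cInd A C B → A' ⊆ A → B' ⊆ B → cInd A' C B') ∧
    (∀ A B C D : Set α, D ⊆ C → C ⊆ B → cInd A D B → cInd A C B) ∧
    (∀ A B C D : Set α, D ⊆ C → C ⊆ B → cInd B C A → cInd C D A → cInd B D A) ∧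
    (∀ A B C : Set α, cInd A C B → cInd (A ∪ C) C B) ∧
    (∀ A B C : Set α, cInd A C B ↔ cInd B C A) ∧
    (∀ A B : Set α, ∃ C : Set α, C ⊆ B ∧
      Cardinal.mk ↥C < Order.succ (Cardinal.mk ↥A) ∧ cInd A C B) ∧
    (∀ A B C Bhat : Set α, SmallSet A → SmallSet B → SmallSet C → SmallSet Bhat →
      B ⊆ Bhat → cInd A C B →
      ∃ g : Equiv.Perm α, (∀ x ∈ B ∪ C, g x = x) ∧ cInd (⇑g '' A) C Bhat) ∧
    (∀ A B C : Set α, SmallSet A → SmallSet B → SmallSet C →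
      ∃ g : Equiv.Perm α, (∀ x ∈ C, g x = x) ∧ cInd (⇑g '' A) C B) ∧
    (∃ A B C : Set α, SmallSet A ∧ SmallSet B ∧ SmallSet C ∧
      A = B ∧ Cardinal.mk ↥A = Cardinal.aleph 1 ∧ C = ∅ ∧
      (∀ A₀ : Set α, A₀ ⊆ A → A₀.Finite → cInd A₀ C B) ∧ ¬ cInd A C B) := by
  have hinf : ℵ₀ ≤ Cardinal.mk α := (Cardinal.aleph0_le_aleph 2).trans hα
  haveI : Infinite α := Cardinal.infinite_iff.2 hinf
  have hemp : SmallSet (∅ : Set α) := by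
    simp only [SmallSet, Cardinal.mk_eq_zero]
    exact lt_of_lt_of_le Cardinal.aleph0_pos hinf
  refine ⟨?_, ?_, ?_, ?_, ?_, ?_, ?_, ext_lemma hα, ?_, ?_⟩
  · intro g A B C h
    have himg : (⇑g '' ((A ∩ B) \ C)).Countable := Set.Countable.image h ⇑g
    unfold cInd
    rwa [Set.image_diff g.injective, Set.image_inter g.injective] at himg
  · intro A B C A' B' h hA hB
    unfold cInd at h ⊢
    refine Set.Countable.mono ?_ h
    exact fun x hx => ⟨⟨hA hx.1.1, hB hx.1.2⟩, hx.2⟩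
  · intro A B C D hDC _ h
    unfold cInd at h ⊢
    refine Set.Countable.mono ?_ h
    exact fun x hx => ⟨hx.1, fun hc => hx.2 (hDC hc)⟩
  · intro A B C D hDC hCB h1 h2
    unfold cInd at h1 h2 ⊢
    refine Set.Countable.mono ?_ (Set.Countable.union h1 h2)
    intro x hx
    obtain ⟨⟨hxB, hxA⟩, hxD⟩ := hx
    by_cases hxC : x ∈ C
    · exact Or.inr ⟨⟨hxC, hxA⟩, hxD⟩
    · exact Or.inl ⟨⟨hxB, hxA⟩, hxC⟩
  · intro A B C h
    unfold cInd at h ⊢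
    refine Set.Countable.mono ?_ h
    exact fun x hx => ⟨⟨hx.1.1.resolve_right hx.2, hx.1.2⟩, hx.2⟩
  · intro A B C
    unfold cInd
    rw [Set.inter_comm]
  · intro A B
    refine ⟨A ∩ B, Set.inter_subset_right, ?_, ?_⟩
    · exact Order.lt_succ_iff.2 (Cardinal.mk_le_mk_of_subset Set.inter_subset_left)
    · simp [cInd]
  · intro A B C hA hB hC
    obtain ⟨g, hfix, hind⟩ := ext_lemma hα A ∅ C B hA hemp hC hB (Set.empty_subset B)
      (by simp [cInd])
    exact ⟨g, fun x hx => hfix x (Or.inr hx), hind⟩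
  · obtain ⟨A, hAcard⟩ := Cardinal.le_mk_iff_exists_set.1
      (le_trans (Cardinal.aleph_le_aleph.2 (by norm_num : (1 : Ordinal) ≤ 2)) hα)
    have hAsmall : SmallSet A := by
      rw [SmallSet, hAcard]
      exact lt_of_lt_of_le (Cardinal.aleph_lt_aleph.2 (by norm_num)) hα
    refine ⟨A, A, ∅, hAsmall, hAsmall, hemp, rfl, hAcard, rfl, ?_, ?_⟩
    · intro A₀ hsub hfin
      exact Set.Countable.mono (fun x hx => hx.1.1) hfin.countable
    · intro h
      have : ((A ∩ A) \ ∅ : Set α) = A := by simp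
      rw [cInd, this] at h
      have := Cardinal.le_aleph0_iff_set_countable.2 h
      rw [hAcard] at this
      exact absurd (lt_of_lt_of_le Cardinal.aleph0_lt_aleph_one this) (lt_irrefl _)
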